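/- (Theorem 2.1, d ≥ 3, uniqueness) Let d ≥ 3, n ≥ 1, r > 0, and let F, G : ℤ^d → GL(n,ℂ) satisfy F(y) = G(y) = I for all y ∉ B_r ∩ ℤ^d. If S(F)(γ_z) = S(G)(γ_z) for every z ∈ ℤ^d, then F = G. Here γ_z = {z + t ẑ* : t ∈ ℝ} with ẑ* = (−z_2, z_1, 0,…,0)/√(z_1² + z_2²) when z_1² + z_2² ≠ 0, and γ_z is the line through z with direction (θ_1, θ_2, 0,…,0) for some fixed rational direction (θ_1, θ_2) when z_1 = z_2 = 0. -/

import Mathlib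

noncomputable section

open Matrix

/-- Embedding of the lattice `ℤ^d` into Euclidean `ℝ^d`. -/
def emb {d : ℕ} (z : Fin d → ℤ) : EuclideanSpace ℝ (Fin d) := WithLp.toLp 2 (fun i : Fin d => (z i : ℝ))

/- Ordered product of `Φ` over `supp`: the factors are multiplied so that larger values
of `key` contribute factors further to the left (the value is `1` if no strictly
`key`-decreasing enumeration of `supp` by a list exists). -/
open Classical in
noncomputable def oprodBy {α G : Type*} [Monoid G] (Φ : α → G) (key : α → ℝ) (supp : Set α) : G :=
  if h : ∃ l : List α, l.Pairwise (fun a b => key b < key a) ∧ ∀ a, a ∈ l ↔ a ∈ supp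
  then (h.choose.map Φ).prod else 1

/-- The discrete non-abelian X-ray transform of `F` along the oriented line through `x`
with direction `θ`: the ordered product of `F y` over lattice points `y` on the line,
the point furthest along the orientation contributing the leftmost factor. -/
noncomputable def discS {d : ℕ} {G : Type*} [Monoid G] (F : (Fin d → ℤ) → G)
    (x θ : EuclideanSpace ℝ (Fin d)) : G :=
  oprodBy F (fun z => ∑ i, ((z i : ℝ) - x i) * θ i)
    {z | (∃ t : ℝ, emb z = x + t • θ) ∧ F z ≠ 1}
/-- The unit direction ẑ* = (−z₂, z₁, 0, …, 0)/√(z₁² + z₂²) of the rational ray γ_z. -/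
def zstar {d : ℕ} (hd : 2 ≤ d) (z : Fin d → ℤ) : EuclideanSpace ℝ (Fin d) :=
  WithLp.toLp 2 (fun i : Fin d =>
    (if (i : ℕ) = 0 then -(z ⟨1, by omega⟩ : ℝ) else if (i : ℕ) = 1 then (z ⟨0, by omega⟩ : ℝ) else 0) /
      Real.sqrt ((z ⟨0, by omega⟩ : ℝ) ^ 2 + (z ⟨1, by omega⟩ : ℝ) ^ 2))

/-- The direction of the rational ray γ_z in ℝ^d (d ≥ 3): it is ẑ* when z₁² + z₂² ≠ 0,
and the direction (θ₁, θ₂, 0, …, 0) when z₁ = z₂ = 0. -/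
def rayDir3 {d : ℕ} (hd : 3 ≤ d) (θ₁ θ₂ : ℝ) (z : Fin d → ℤ) : EuclideanSpace ℝ (Fin d) :=
  if z ⟨0, by omega⟩ = 0 ∧ z ⟨1, by omega⟩ = 0 then
    WithLp.toLp 2 (fun i : Fin d => if (i : ℕ) = 0 then θ₁ else if (i : ℕ) = 1 then θ₂ else 0)
  else zstar (by omega) z

/-! ### Auxiliary lemmas -/

lemma oprod_eq {α M : Type*} [Monoid M] (Φ : α → M) (key : α → ℝ) (supp : Set α)
    (l : List α) (hl : l.Pairwise (fun a b => key b < key a)) (hmem : ∀ a, a ∈ l ↔ a ∈ supp) :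
    oprodBy Φ key supp = (l.map Φ).prod := by
  have hex : ∃ l' : List α, l'.Pairwise (fun a b => key b < key a) ∧ ∀ a, a ∈ l' ↔ a ∈ supp :=
    ⟨l, hl, hmem⟩
  rw [oprodBy, dif_pos hex]
  obtain ⟨hl', hmem'⟩ := hex.choose_spec
  have hnd : ∀ (m : List α), m.Pairwise (fun a b => key b < key a) → m.Nodup := by
    intro m hm
    exact hm.imp (fun h => by rintro rfl; exact lt_irrefl _ h)
  have ha : IsAntisymm α (fun a b => key b < key a) :=
    ⟨fun a b h1 h2 => absurd (h1.trans h2) (lt_irrefl _)⟩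
  have : hex.choose = l := by
    refine List.Perm.eq_of_pairwise (fun a b _ _ h1 h2 => absurd (h1.trans h2) (lt_irrefl _)) hl' hl ?_
    rw [List.perm_ext_iff_of_nodup (hnd _ hl') (hnd _ hl)]
    intro a; rw [hmem', hmem]
  rw [this]

lemma exists_sorted {α : Type*} (key : α → ℝ) :
    ∀ s : Finset α, (∀ a ∈ s, ∀ b ∈ s, key a = key b → a = b) →
    ∃ l : List α, l.Pairwise (fun a b => key b < key a) ∧ ∀ a, a ∈ l ↔ a ∈ s := by
  have : DecidableEq α := Classical.decEq α
  intro s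
  induction s using Finset.strongInduction with
  | _ s ih =>
    intro hinj
    rcases s.eq_empty_or_nonempty with rfl | hne
    · exact ⟨[], List.Pairwise.nil, by simp⟩
    · obtain ⟨b, hb, hmax⟩ := s.exists_max_image key hne
      obtain ⟨l, hl, hml⟩ := ih (s.erase b) (Finset.erase_ssubset hb)
          (fun a ha c hc => hinj a (Finset.mem_of_mem_erase ha) c (Finset.mem_of_mem_erase hc))
      refine ⟨b :: l, ?_, ?_⟩
      · refine List.pairwise_cons.2 ⟨?_, hl⟩
        intro a ha
        have has : a ∈ s.erase b := (hml a).1 ha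
        have hne' : a ≠ b := Finset.ne_of_mem_erase has
        rcases (hmax a (Finset.mem_of_mem_erase has)).lt_or_eq with h | h
        · exact h
        · exact absurd (hinj a (Finset.mem_of_mem_erase has) b hb h) hne'
      · intro a
        simp only [List.mem_cons, hml, Finset.mem_erase]
        constructor
        · rintro (rfl | ⟨_, h⟩); exacts [hb, h]
        · intro h; by_cases hab : a = b
          · exact Or.inl hab
          · exact Or.inr ⟨hab, h⟩

lemma prod_filter_ne_one {α M : Type*} [Monoid M] (Φ : α → M)
    [DecidablePred (fun z => Φ z = 1)] (L : List α) :
    ((L.filter (fun z => !decide (Φ z = 1))).map Φ).prod = (L.map Φ).prod := by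
  induction L with
  | nil => simp
  | cons a L ih =>
    rw [List.filter_cons]
    by_cases h : Φ a = 1
    · simp [h, ih]
    · simp [h, ih]

lemma norm_emb_sq {d : ℕ} (z : Fin d → ℤ) : ‖emb z‖ ^ 2 = ∑ i, ((z i : ℝ)) ^ 2 := by
  rw [EuclideanSpace.norm_eq, Real.sq_sqrt (by positivity)]
  refine Finset.sum_congr rfl fun i _ => ?_
  simp [emb, sq_abs]

lemma ball_finite {d : ℕ} (r : ℝ) : {z : Fin d → ℤ | ‖emb z‖ ≤ r}.Finite := by
  by_cases hr0 : 0 ≤ r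
  · apply Set.Finite.subset
      (Finset.Icc (fun _ => -⌈r⌉) (fun _ => ⌈r⌉) : Finset (Fin d → ℤ)).finite_toSet
    intro z hz
    simp only [Set.mem_setOf_eq] at hz
    have h2 : ∀ i, |(z i : ℝ)| ≤ r := by
      intro i
      have h3 : (z i : ℝ) ^ 2 ≤ ‖emb z‖ ^ 2 := by
        rw [norm_emb_sq]
        exact Finset.single_le_sum (f := fun i => ((z i : ℝ)) ^ 2)
          (fun i _ => sq_nonneg _) (Finset.mem_univ i)
      nlinarith [abs_nonneg ((z i : ℝ)), sq_abs ((z i : ℝ)), norm_nonneg (emb z)]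
    have h4 : ∀ i, |z i| ≤ ⌈r⌉ := by
      intro i
      have : |(z i : ℝ)| ≤ (⌈r⌉ : ℝ) := le_trans (h2 i) (Int.le_ceil r)
      exact_mod_cast this
    simp only [Finset.coe_Icc, Set.mem_Icc, Pi.le_def]
    exact ⟨fun i => neg_le_of_abs_le (h4 i), fun i => le_of_abs_le (h4 i)⟩
  · convert Set.finite_empty
    ext z
    simp only [Set.mem_setOf_eq, Set.mem_empty_iff_false, iff_false]
    intro hz
    exact hr0 (le_trans (norm_nonneg _) hz)

lemma rayDir_props {d : ℕ} (hd : 3 ≤ d) (θ₁ θ₂ : ℝ)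
    (hθu : θ₁ ^ 2 + θ₂ ^ 2 = 1) (y : Fin d → ℤ) :
    (∀ i : Fin d, 2 ≤ (i : ℕ) → rayDir3 hd θ₁ θ₂ y i = 0) ∧
    (rayDir3 hd θ₁ θ₂ y ⟨0, by omega⟩) ^ 2 + (rayDir3 hd θ₁ θ₂ y ⟨1, by omega⟩) ^ 2 = 1 ∧
    (y ⟨0, by omega⟩ : ℝ) * rayDir3 hd θ₁ θ₂ y ⟨0, by omega⟩
      + (y ⟨1, by omega⟩ : ℝ) * rayDir3 hd θ₁ θ₂ y ⟨1, by omega⟩ = 0 := by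
  by_cases hy : y ⟨0, by omega⟩ = 0 ∧ y ⟨1, by omega⟩ = 0
  · refine ⟨?_, ?_, ?_⟩
    · intro i hi
      simp only [rayDir3, if_pos hy]
      rw [if_neg (by omega), if_neg (by omega)]
    · simp only [rayDir3, if_pos hy]
      norm_num [hθu]
    · simp only [rayDir3, if_pos hy, hy.1, hy.2]
      norm_num
  · have hpos : (0:ℝ) < (y ⟨0, by omega⟩ : ℝ) ^ 2 + (y ⟨1, by omega⟩ : ℝ) ^ 2 := by
      rcases not_and_or.1 hy with h0 | h0
      · have : (y ⟨0, by omega⟩ : ℝ) ≠ 0 := by exact_mod_cast h0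
        positivity
      · have : (y ⟨1, by omega⟩ : ℝ) ≠ 0 := by exact_mod_cast h0
        positivity
    have hs : Real.sqrt ((y ⟨0, by omega⟩ : ℝ) ^ 2 + (y ⟨1, by omega⟩ : ℝ) ^ 2) ^ 2
        = (y ⟨0, by omega⟩ : ℝ) ^ 2 + (y ⟨1, by omega⟩ : ℝ) ^ 2 := Real.sq_sqrt hpos.le
    have hsne : Real.sqrt ((y ⟨0, by omega⟩ : ℝ) ^ 2 + (y ⟨1, by omega⟩ : ℝ) ^ 2) ≠ 0 := by
      have := Real.sqrt_pos.2 hpos; positivity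
    refine ⟨?_, ?_, ?_⟩
    · intro i hi
      simp only [rayDir3, if_neg hy, zstar]
      rw [if_neg (by omega), if_neg (by omega), zero_div]
    · simp only [rayDir3, if_neg hy, zstar]
      norm_num
      rw [div_pow, div_pow, ← add_div, neg_pow]
      rw [hs]
      field_simp
      ring
    · simp only [rayDir3, if_neg hy, zstar]
      norm_num
      ring

lemma line_pt {d : ℕ} (hd : 3 ≤ d) (y z : Fin d → ℤ) (θ : EuclideanSpace ℝ (Fin d)) (t : ℝ)
    (hθ2 : ∀ i : Fin d, 2 ≤ (i : ℕ) → θ i = 0)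
    (hunit : θ ⟨0, by omega⟩ ^ 2 + θ ⟨1, by omega⟩ ^ 2 = 1)
    (horth : (y ⟨0, by omega⟩ : ℝ) * θ ⟨0, by omega⟩ + (y ⟨1, by omega⟩ : ℝ) * θ ⟨1, by omega⟩ = 0)
    (hz : emb z = emb y + t • θ) :
    (∑ i, ((z i : ℝ)) ^ 2) = (∑ i, ((y i : ℝ)) ^ 2) + t ^ 2 ∧
    (∑ i, ((z i : ℝ) - ((emb y) i)) * θ i) = t ∧
    (t = 0 → z = y) := by
  set i0 : Fin d := ⟨0, by omega⟩
  set i1 : Fin d := ⟨1, by omega⟩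
  have hi01 : i0 ≠ i1 := by simp [i0, i1, Fin.ext_iff]
  have hcoord : ∀ i, (z i : ℝ) = (y i : ℝ) + t * θ i := by
    intro i
    have := congrFun (congrArg WithLp.ofLp hz) i
    simpa [emb, PiLp.add_apply, PiLp.smul_apply, smul_eq_mul] using this
  have htail : ∀ i : Fin d, i ∉ ({i0, i1} : Finset (Fin d)) → (z i : ℝ) = (y i : ℝ) := by
    intro i hi
    have h2 : 2 ≤ (i : ℕ) := by
      simp only [Finset.mem_insert, Finset.mem_singleton] at hi
      push_neg at hi
      have h0 : (i : ℕ) ≠ 0 := fun hc => hi.1 (by simp [i0, Fin.ext_iff, hc])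
      have h1 : (i : ℕ) ≠ 1 := fun hc => hi.2 (by simp [i1, Fin.ext_iff, hc])
      omega
    rw [hcoord i, hθ2 i h2]; ring
  refine ⟨?_, ?_, ?_⟩
  · have key : ∑ i, (((z i : ℝ)) ^ 2 - ((y i : ℝ)) ^ 2) = t ^ 2 := by
      rw [← Finset.sum_subset (Finset.subset_univ ({i0, i1} : Finset (Fin d)))
        (by intro i _ hi; rw [htail i hi]; ring)]
      rw [Finset.sum_pair hi01, hcoord i0, hcoord i1]
      linear_combination (2*t)*horth + t^2*hunit
    have := Finset.sum_sub_distrib (f := fun i => ((z i : ℝ)) ^ 2) (g := fun i => ((y i : ℝ)) ^ 2)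
      (s := (Finset.univ : Finset (Fin d)))
    linarith [key, this.symm ▸ key]
  · have key : ∑ i, ((z i : ℝ) - ((emb y) i)) * θ i = t := by
      rw [← Finset.sum_subset (Finset.subset_univ ({i0, i1} : Finset (Fin d)))
        (by intro i _ hi; rw [hθ2 i ?_]; ring
            simp only [Finset.mem_insert, Finset.mem_singleton] at hi
            push_neg at hi
            have h0 : (i : ℕ) ≠ 0 := fun hc => hi.1 (by simp [i0, Fin.ext_iff, hc])
            have h1 : (i : ℕ) ≠ 1 := fun hc => hi.2 (by simp [i1, Fin.ext_iff, hc])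
            omega)]
      rw [Finset.sum_pair hi01]
      have e0 : (emb y) i0 = (y i0 : ℝ) := rfl
      have e1 : (emb y) i1 = (y i1 : ℝ) := rfl
      rw [e0, e1, hcoord i0, hcoord i1]
      linear_combination t*hunit
    exact key
  · intro ht
    funext i
    have := hcoord i
    rw [ht] at this
    exact_mod_cast (by linarith : (z i : ℝ) = (y i : ℝ))

/-- Theorem 2.1, d ≥ 3, uniqueness: the discrete non-abelian X-ray
transform on the rational rays γ_z, z ∈ ℤ^d, uniquely determines a function
F : ℤ^d → GL(n,ℂ) equal to I outside B_r ∩ ℤ^d. -/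
theorem stmt8 (d n : ℕ) (hd : 3 ≤ d) (hn : 1 ≤ n) (r : ℝ) (hr : 0 < r)
    (θ₁ θ₂ : ℝ)
    (hθ : ∃ w : Fin 2 → ℤ, w ≠ 0 ∧ θ₁ = (w 0 : ℝ) / ‖emb w‖ ∧ θ₂ = (w 1 : ℝ) / ‖emb w‖)
    (F G : (Fin d → ℤ) → GL (Fin n) ℂ)
    (hF : ∀ y : Fin d → ℤ, ¬ ‖emb y‖ ≤ r → F y = 1)
    (hG : ∀ y : Fin d → ℤ, ¬ ‖emb y‖ ≤ r → G y = 1)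
    (h : ∀ z : Fin d → ℤ, discS F (emb z) (rayDir3 hd θ₁ θ₂ z) = discS G (emb z) (rayDir3 hd θ₁ θ₂ z)) :
    F = G := by
  classical
  obtain ⟨w, hw0, hw1, hw2⟩ := hθ
  have hwnorm : ‖emb w‖ ≠ 0 := by
    simp only [ne_eq, norm_eq_zero]
    intro hc
    apply hw0
    funext i
    have hwi : (w i : ℝ) = 0 := by simpa [emb] using congrFun (congrArg WithLp.ofLp hc) i
    exact_mod_cast hwi
  have hwsq : ‖emb w‖ ^ 2 = (w 0 : ℝ) ^ 2 + (w 1 : ℝ) ^ 2 := by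
    rw [norm_emb_sq, Fin.sum_univ_two]
  have hθu : θ₁ ^ 2 + θ₂ ^ 2 = 1 := by
    rw [hw1, hw2, div_pow, div_pow, ← add_div, ← hwsq, div_self (pow_ne_zero _ hwnorm)]
  have hnormN : ∀ z : Fin d → ℤ, ‖emb z‖ ^ 2 = ((∑ i, z i ^ 2 : ℤ) : ℝ) := by
    intro z
    rw [norm_emb_sq]
    push_cast
    rfl
  have main : ∀ k : ℕ, ∀ y : Fin d → ℤ, r ^ 2 < ((∑ i, y i ^ 2 : ℤ) : ℝ) + k → F y = G y := by
    intro k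
    induction k using Nat.strong_induction_on with
    | _ k ih =>
      intro y hy
      by_cases hbig : r ^ 2 < ((∑ i, y i ^ 2 : ℤ) : ℝ)
      · have hout : ¬ ‖emb y‖ ≤ r := by
          intro hle
          have hn2 := hnormN y
          nlinarith [norm_nonneg (emb y)]
        rw [hF y hout, hG y hout]
      · push_neg at hbig
        obtain ⟨k, rfl⟩ : ∃ k', k = k' + 1 := by
          cases k with
          | zero => exfalso; simp only [Nat.cast_zero, add_zero] at hy; linarith
          | succ k => exact ⟨k, rfl⟩
        have hymem : ‖emb y‖ ≤ r := by
          by_contra hc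
          push_neg at hc
          have hn2 := hnormN y
          nlinarith
        set θ : EuclideanSpace ℝ (Fin d) := rayDir3 hd θ₁ θ₂ y with hθdef
        obtain ⟨hp1, hp2, hp3⟩ := rayDir_props hd θ₁ θ₂ hθu y
        have hSfin : ({z : Fin d → ℤ | ∃ t : ℝ, emb z = emb y + t • θ}
            ∩ {z | ‖emb z‖ ≤ r}).Finite := (ball_finite r).inter_of_right _
        set S : Finset (Fin d → ℤ) := hSfin.toFinset with hS
        have hSmem : ∀ z, z ∈ S ↔ (∃ t : ℝ, emb z = emb y + t • θ) ∧ ‖emb z‖ ≤ r := by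
          intro z
          rw [hS, Set.Finite.mem_toFinset]
          rfl
        have hyS : y ∈ S := (hSmem y).2 ⟨⟨0, by rw [zero_smul, add_zero]⟩, hymem⟩
        have hinj : ∀ a ∈ S, ∀ b ∈ S,
            (fun z => ∑ i, ((z i : ℝ) - (emb y) i) * θ i) a
              = (fun z => ∑ i, ((z i : ℝ) - (emb y) i) * θ i) b → a = b := by
          intro a ha b hb hab
          obtain ⟨⟨ta, hta⟩, _⟩ := (hSmem a).1 ha
          obtain ⟨⟨tb, htb⟩, _⟩ := (hSmem b).1 hb
          have h1 := (line_pt hd y a θ ta hp1 hp2 hp3 hta).2.1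
          have h2 := (line_pt hd y b θ tb hp1 hp2 hp3 htb).2.1
          simp only at hab
          have htt : ta = tb := by rw [← h1, ← h2, hab]
          have hemb : emb a = emb b := by rw [hta, htb, htt]
          funext i
          have := congrFun (congrArg WithLp.ofLp hemb) i
          simp only [emb] at this
          exact_mod_cast this
        obtain ⟨L, hLsort, hLmem⟩ :=
          exists_sorted (fun z => ∑ i, ((z i : ℝ) - (emb y) i) * θ i) S hinj
        have hdisc : ∀ (Φ : (Fin d → ℤ) → GL (Fin n) ℂ),
            (∀ z, ¬ ‖emb z‖ ≤ r → Φ z = 1) →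
            discS Φ (emb y) θ = (L.map Φ).prod := by
          intro Φ hΦ
          rw [discS, ← prod_filter_ne_one Φ L]
          refine oprod_eq Φ _ _ (L.filter (fun z => !decide (Φ z = 1)))
            (hLsort.sublist List.filter_sublist) ?_
          intro a
          simp only [List.mem_filter, Bool.not_eq_true', decide_eq_false_iff_not, hLmem, hSmem,
            Set.mem_setOf_eq]
          constructor
          · rintro ⟨⟨hl, _⟩, hne⟩
            exact ⟨hl, hne⟩
          · rintro ⟨hl, hne⟩
            refine ⟨⟨hl, ?_⟩, hne⟩
            by_contra hc
            exact hne (hΦ a hc)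
        have hYY := h y
        rw [← hθdef, hdisc F hF, hdisc G hG] at hYY
        have hyL : y ∈ L := (hLmem y).2 hyS
        have hnd : L.Nodup := hLsort.imp (fun h => by rintro rfl; exact lt_irrefl _ h)
        obtain ⟨L₁, L₂, rfl⟩ := List.append_of_mem hyL
        obtain ⟨hnd1, hnd2, hdisj⟩ := List.nodup_append.1 hnd
        have hyL₁ : y ∉ L₁ := fun hc => hdisj y hc y List.mem_cons_self rfl
        have hyL₂ : y ∉ L₂ := (List.nodup_cons.1 hnd2).1
        have hFG : ∀ a, a ∈ L₁ ++ y :: L₂ → a ≠ y → F a = G a := by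
          intro a haL hay
          have haS := (hLmem a).1 haL
          obtain ⟨⟨t, hta⟩, _⟩ := (hSmem a).1 haS
          obtain ⟨hsum, _, hzero⟩ := line_pt hd y a θ t hp1 hp2 hp3 hta
          have ht0 : t ≠ 0 := fun hc => hay (hzero hc)
          have hgt : ((∑ i, y i ^ 2 : ℤ) : ℝ) < ((∑ i, a i ^ 2 : ℤ) : ℝ) := by
            push_cast
            have ht2 : 0 < t ^ 2 := by positivity
            linarith [hsum]
          have hge : ((∑ i, y i ^ 2 : ℤ) : ℤ) + 1 ≤ (∑ i, a i ^ 2 : ℤ) := by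
            have : ((∑ i, y i ^ 2 : ℤ) : ℤ) < (∑ i, a i ^ 2 : ℤ) := by exact_mod_cast hgt
            omega
          refine ih k (Nat.lt_succ_self k) a ?_
          have hge' : ((∑ i, y i ^ 2 : ℤ) : ℝ) + 1 ≤ ((∑ i, a i ^ 2 : ℤ) : ℝ) := by
            exact_mod_cast hge
          push_cast at hy hge' ⊢
          linarith
        have hmap1 : L₁.map F = L₁.map G :=
          List.map_congr_left (fun a ha => hFG a (List.mem_append_left _ ha)
            (fun hc => hyL₁ (hc ▸ ha)))
        have hmap2 : L₂.map F = L₂.map G :=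
          List.map_congr_left (fun a ha => hFG a
            (List.mem_append_right _ (List.mem_cons_of_mem _ ha)) (fun hc => hyL₂ (hc ▸ ha)))
        rw [List.map_append, List.map_append, List.map_cons, List.map_cons, List.prod_append,
          List.prod_append, List.prod_cons, List.prod_cons, hmap1, hmap2] at hYY
        have h1 := mul_left_cancel hYY
        exact mul_right_cancel h1
  funext y
  refine main (⌈r ^ 2⌉₊ + 1) y ?_
  have h1 : (0:ℝ) ≤ ((∑ i, y i ^ 2 : ℤ) : ℝ) := by positivity
  have h2 : r ^ 2 ≤ (⌈r ^ 2⌉₊ : ℝ) := Nat.le_ceil _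
  push_cast at h1 h2 ⊢
  linarith
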